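/- Let X, Y, Z be finite-dimensional real normed spaces and T a nonzero bilinear operator from X × Y to Z. Then T is a smooth point of the normed space of bilinear operators B(X×Y, Z) if and only if there exists (x₀,y₀) with ‖x₀‖ = ‖y₀‖ = 1 such that M_T = {(±x₀, ±y₀)} and T(x₀,y₀) is a smooth point of Z. -/

import Mathlib

open ContinuousLinearMap Metric Filter Topology

set_option maxHeartbeats 2000000
set_option synthInstance.maxHeartbeats 1000000

section Aux

variable {X Y Z : Type*} [NormedAddCommGroup X] [NormedSpace ℝ X]
    [NormedAddCommGroup Y] [NormedSpace ℝ Y] [NormedAddCommGroup Z] [NormedSpace ℝ Z]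

noncomputable instance instWDualNACG :
    NormedAddCommGroup ((X →L[ℝ] Y →L[ℝ] Z) →L[ℝ] ℝ) :=
  @ContinuousLinearMap.toNormedAddCommGroup ℝ ℝ (X →L[ℝ] Y →L[ℝ] Z) ℝ
    _ _ _ _ _ _ (RingHom.id ℝ) _

noncomputable instance instWDualNS :
    NormedSpace ℝ ((X →L[ℝ] Y →L[ℝ] Z) →L[ℝ] ℝ) :=
  @ContinuousLinearMap.toNormedSpace ℝ ℝ (X →L[ℝ] Y →L[ℝ] Z) ℝ
    _ _ _ _ _ _ (RingHom.id ℝ) _ ℝ _ _ _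

/-- The functional `S ↦ g (S x y)` on the space of bilinear maps. -/
noncomputable def evalFun (g : Z →L[ℝ] ℝ) (x : X) (y : Y) :
    (X →L[ℝ] Y →L[ℝ] Z) →L[ℝ] ℝ :=
  g.comp ((ContinuousLinearMap.apply ℝ Z y).comp
    (ContinuousLinearMap.apply ℝ (Y →L[ℝ] Z) x))

@[simp] lemma evalFun_apply (g : Z →L[ℝ] ℝ) (x : X) (y : Y)
    (S : X →L[ℝ] Y →L[ℝ] Z) : evalFun g x y S = g (S x y) := rfl

lemma norm_apply₂_le (S : X →L[ℝ] Y →L[ℝ] Z) (x : X) (y : Y) :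
    ‖S x y‖ ≤ ‖S‖ * ‖x‖ * ‖y‖ := by
  calc ‖S x y‖ ≤ ‖S x‖ * ‖y‖ := (S x).le_opNorm y
  _ ≤ ‖S‖ * ‖x‖ * ‖y‖ := by
      have := S.le_opNorm x
      have := norm_nonneg y
      nlinarith

lemma evalFun_norm_le (g : Z →L[ℝ] ℝ) (x : X) (y : Y) (hg : ‖g‖ = 1)
    (hx : ‖x‖ = 1) (hy : ‖y‖ = 1) : ‖evalFun g x y‖ ≤ 1 := by
  refine opNorm_le_bound _ zero_le_one fun S => ?_
  calc ‖evalFun g x y S‖ = ‖g (S x y)‖ := rfl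
  _ ≤ ‖g‖ * ‖S x y‖ := g.le_opNorm _
  _ ≤ 1 * (‖S‖ * ‖x‖ * ‖y‖) := by
      rw [hg]; exact mul_le_mul_of_nonneg_left (norm_apply₂_le S x y) zero_le_one
  _ = 1 * ‖S‖ := by rw [hx, hy]; ring

/-- rank-one style bilinear operator -/
noncomputable def rankOne (f₁ : X →L[ℝ] ℝ) (f₂ : Y →L[ℝ] ℝ) (z : Z) :
    X →L[ℝ] Y →L[ℝ] Z :=
  f₁.smulRight (f₂.smulRight z)

@[simp] lemma rankOne_apply (f₁ : X →L[ℝ] ℝ) (f₂ : Y →L[ℝ] ℝ) (z : Z) (x : X) (y : Y) :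
    rankOne f₁ f₂ z x y = f₁ x • f₂ y • z := rfl

lemma fun_apply_le {E : Type*} [NormedAddCommGroup E] [NormedSpace ℝ E]
    (ψ : E →L[ℝ] ℝ) (v : E) : ψ v ≤ ‖ψ‖ * ‖v‖ := by
  calc ψ v ≤ |ψ v| := le_abs_self _
  _ = ‖ψ v‖ := (Real.norm_eq_abs _).symm
  _ ≤ ‖ψ‖ * ‖v‖ := ψ.le_opNorm v

lemma dual_sep {v w : X} (h : ∀ f : X →L[ℝ] ℝ, f v = f w) : v = w := by
  by_contra hne
  obtain ⟨f, _, hf⟩ := exists_dual_vector ℝ (v - w) (norm_ne_zero_iff.2 (sub_ne_zero.2 hne))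
  have h2 : f v - f w = ‖v - w‖ := by
    rw [← map_sub]; exact_mod_cast hf
  rw [h f, sub_self] at h2
  exact (sub_ne_zero.2 hne) (by rw [← norm_eq_zero, ← h2])

lemma apply_le_of_unit (R : X →L[ℝ] Y →L[ℝ] Z) {p : X × Y} (hp : ‖p‖ = 1) :
    ‖R p.1 p.2‖ ≤ ‖R‖ := by
  have h1 : ‖p.1‖ ≤ 1 := hp ▸ norm_fst_le p
  have h2 : ‖p.2‖ ≤ 1 := hp ▸ norm_snd_le p
  calc ‖R p.1 p.2‖ ≤ ‖R‖ * ‖p.1‖ * ‖p.2‖ := norm_apply₂_le R p.1 p.2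
  _ = ‖R‖ * (‖p.1‖ * ‖p.2‖) := by ring
  _ ≤ ‖R‖ * 1 := mul_le_mul_of_nonneg_left
        (mul_le_one₀ h1 (norm_nonneg _) h2) (norm_nonneg R)
  _ = ‖R‖ := mul_one _

/-- Norm attainment on the unit sphere of the product, for any bilinear operator. -/
lemma exists_max [FiniteDimensional ℝ X] [FiniteDimensional ℝ Y]
    [Nontrivial X] [Nontrivial Y] (R : X →L[ℝ] Y →L[ℝ] Z) :
    ∃ p : X × Y, ‖p‖ = 1 ∧ ‖R p.1 p.2‖ = ‖R‖ := by
  have hsc : IsCompact (sphere (0 : X × Y) 1) := isCompact_sphere _ _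
  have hne : (sphere (0 : X × Y) 1).Nonempty := NormedSpace.sphere_nonempty.2 zero_le_one
  have hcont : Continuous fun p : X × Y => ‖R p.1 p.2‖ := R.continuous₂.norm
  obtain ⟨p, hp, hmax⟩ := hsc.exists_isMaxOn hne hcont.continuousOn
  rw [mem_sphere_zero_iff_norm] at hp
  refine ⟨p, hp, le_antisymm ?_ ?_⟩
  · have h1 : ‖p.1‖ ≤ 1 := hp ▸ norm_fst_le p
    have h2 : ‖p.2‖ ≤ 1 := hp ▸ norm_snd_le p
    calc ‖R p.1 p.2‖ ≤ ‖R‖ * ‖p.1‖ * ‖p.2‖ := norm_apply₂_le R p.1 p.2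
    _ = ‖R‖ * (‖p.1‖ * ‖p.2‖) := by ring
    _ ≤ ‖R‖ * 1 := mul_le_mul_of_nonneg_left
          (mul_le_one₀ h1 (norm_nonneg _) h2) (norm_nonneg R)
    _ = ‖R‖ := mul_one _
  · refine R.opNorm_le_bound (norm_nonneg _) fun x => ?_
    refine (R x).opNorm_le_bound (by positivity) fun y => ?_
    rcases eq_or_ne x 0 with rfl | hx
    · simp
    rcases eq_or_ne y 0 with rfl | hy
    · simp [mul_assoc]
    have hx' : ‖x‖ ≠ 0 := norm_ne_zero_iff.2 hx
    have hy' : ‖y‖ ≠ 0 := norm_ne_zero_iff.2 hy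
    set q : X × Y := (‖x‖⁻¹ • x, ‖y‖⁻¹ • y) with hq
    have hqs : q ∈ sphere (0 : X × Y) 1 := by
      rw [mem_sphere_zero_iff_norm, Prod.norm_def]
      simp [hq, norm_smul, abs_of_pos, inv_mul_cancel₀ hx', inv_mul_cancel₀ hy']
    have hle := hmax hqs
    simp only [Set.mem_setOf_eq] at hle
    have hval : R q.1 q.2 = (‖x‖⁻¹ * ‖y‖⁻¹) • R x y := by
      simp [hq, map_smul, smul_smul, mul_comm]
    have hnv : ‖R q.1 q.2‖ = ‖x‖⁻¹ * ‖y‖⁻¹ * ‖R x y‖ := by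
      rw [hval, norm_smul, Real.norm_eq_abs, abs_of_nonneg (by positivity)]
    rw [hnv] at hle
    calc ‖R x y‖ = ‖x‖ * ‖y‖ * (‖x‖⁻¹ * ‖y‖⁻¹ * ‖R x y‖) := by
          field_simp
    _ ≤ ‖x‖ * ‖y‖ * ‖R p.1 p.2‖ := by
          apply mul_le_mul_of_nonneg_left hle (by positivity)
    _ = ‖R p.1 p.2‖ * ‖x‖ * ‖y‖ := by ring

/-- Norming points have unit coordinates. -/
lemma mem_unit (T : X →L[ℝ] Y →L[ℝ] Z) (hTpos : 0 < ‖T‖) {p : X × Y}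
    (hp : ‖p‖ = 1) (hpT : ‖T p.1 p.2‖ = ‖T‖) : ‖p.1‖ = 1 ∧ ‖p.2‖ = 1 := by
  have h1 : ‖p.1‖ ≤ 1 := hp ▸ norm_fst_le p
  have h2 : ‖p.2‖ ≤ 1 := hp ▸ norm_snd_le p
  have h3 := norm_apply₂_le T p.1 p.2
  rw [hpT] at h3
  have h4 := norm_nonneg p.1
  have h5 := norm_nonneg p.2
  have hab : 1 ≤ ‖p.1‖ * ‖p.2‖ := by
    by_contra h
    push_neg at h
    have := mul_lt_mul_of_pos_left h hTpos
    nlinarith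
  constructor
  · refine le_antisymm h1 ?_
    nlinarith [mul_nonneg h4 (sub_nonneg.2 h2)]
  · refine le_antisymm h2 ?_
    nlinarith [mul_nonneg h5 (sub_nonneg.2 h1)]

end Aux

section Key

variable {X Y Z : Type*} [NormedAddCommGroup X] [NormedSpace ℝ X]
    [NormedAddCommGroup Y] [NormedSpace ℝ Y] [NormedAddCommGroup Z] [NormedSpace ℝ Z]
    [FiniteDimensional ℝ X] [FiniteDimensional ℝ Y] [FiniteDimensional ℝ Z]

lemma key_le [Nontrivial X] [Nontrivial Y] [Nontrivial Z]
    (T : X →L[ℝ] Y →L[ℝ] Z) (hTpos : 0 < ‖T‖) (x₀ : X) (y₀ : Y)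
    (hz : ‖T x₀ y₀‖ = ‖T‖)
    (hsub : ∀ p : X × Y, ‖p‖ = 1 → ‖T p.1 p.2‖ = ‖T‖ →
        p = (x₀, y₀) ∨ p = (-x₀, y₀) ∨ p = (x₀, -y₀) ∨ p = (-x₀, -y₀))
    (g : Z →L[ℝ] ℝ)
    (hguniq : ∀ g' : Z →L[ℝ] ℝ, ‖g'‖ = 1 → g' (T x₀ y₀) = ‖T x₀ y₀‖ → g' = g)
    (Ψ : (X →L[ℝ] Y →L[ℝ] Z) →L[ℝ] ℝ) (hΨ1 : ‖Ψ‖ ≤ 1) (hΨT : Ψ T = ‖T‖)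
    (S : X →L[ℝ] Y →L[ℝ] Z) :
    Ψ S ≤ g (S x₀ y₀) := by
  set t : ℕ → ℝ := fun n => 1 / (n + 1) with ht
  have htpos : ∀ n, 0 < t n := fun n => by positivity
  have hex : ∀ n : ℕ, ∃ p : X × Y, ‖p‖ = 1 ∧ ‖(T + t n • S) p.1 p.2‖ = ‖T + t n • S‖ :=
    fun n => exists_max _
  choose p hp1 hp2 using hex
  have hexh : ∀ n : ℕ, ∃ h : Z →L[ℝ] ℝ, ‖h‖ = 1 ∧
      h ((T + t n • S) (p n).1 (p n).2) = ‖(T + t n • S) (p n).1 (p n).2‖ := by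
    intro n
    obtain ⟨h, h1, h2⟩ := exists_dual_vector' ℝ ((T + t n • S) (p n).1 (p n).2)
    exact ⟨h, h1, by exact_mod_cast h2⟩
  choose h hh1 hh2 using hexh
  have hK : IsCompact ((sphere (0 : X × Y) 1) ×ˢ (closedBall (0 : Z →L[ℝ] ℝ) 1)) :=
    (isCompact_sphere _ _).prod (isCompact_closedBall _ _)
  have hmem : ∀ n, (p n, h n) ∈ (sphere (0 : X × Y) 1) ×ˢ (closedBall (0 : Z →L[ℝ] ℝ) 1) :=
    fun n => ⟨mem_sphere_zero_iff_norm.2 (hp1 n), mem_closedBall_zero_iff.2 (hh1 n).le⟩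
  obtain ⟨⟨q, k⟩, hqk, φ, hφ, hlim⟩ := hK.tendsto_subseq hmem
  have hq1 : ‖q‖ = 1 := mem_sphere_zero_iff_norm.1 hqk.1
  have hk1 : ‖k‖ ≤ 1 := mem_closedBall_zero_iff.1 hqk.2
  have ht0 : Tendsto (fun n => t (φ n)) atTop (𝓝 0) := by
    refine squeeze_zero (fun n => (htpos (φ n)).le) (fun n => ?_)
      tendsto_one_div_add_atTop_nhds_zero_nat
    have hn : (n : ℝ) + 1 ≤ (φ n : ℝ) + 1 := by
      have h' : n ≤ φ n := hφ.le_apply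
      exact_mod_cast Nat.succ_le_succ h'
    exact one_div_le_one_div_of_le (by positivity) hn
  -- continuity of the two evaluation maps
  have hevT : Continuous fun pr : (X × Y) × (Z →L[ℝ] ℝ) => pr.2 (T pr.1.1 pr.1.2) :=
    isBoundedBilinearMap_apply.continuous.comp
      (Continuous.prodMk continuous_snd (T.continuous₂.comp continuous_fst))
  have hevS : Continuous fun pr : (X × Y) × (Z →L[ℝ] ℝ) => pr.2 (S pr.1.1 pr.1.2) :=
    isBoundedBilinearMap_apply.continuous.comp
      (Continuous.prodMk continuous_snd (S.continuous₂.comp continuous_fst))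
  have hTq : Tendsto (fun n => h (φ n) (T (p (φ n)).1 (p (φ n)).2)) atTop
      (𝓝 (k (T q.1 q.2))) := (hevT.tendsto (q, k)).comp hlim
  have hSq : Tendsto (fun n => h (φ n) (S (p (φ n)).1 (p (φ n)).2)) atTop
      (𝓝 (k (S q.1 q.2))) := (hevS.tendsto (q, k)).comp hlim
  have hnormlim : Tendsto (fun n => ‖T + t (φ n) • S‖) atTop (𝓝 ‖T‖) := by
    have hc0 : Continuous fun s : ℝ => T + s • S :=
      continuous_const.add (continuous_id.smul continuous_const)
    have hc : Continuous fun s : ℝ => ‖T + s • S‖ :=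
      (@continuous_norm (X →L[ℝ] Y →L[ℝ] Z) _).comp hc0
    have h2 := (hc.tendsto 0).comp ht0
    have e0 : T + (0:ℝ) • S = T := by
      ext a b
      simp
    rw [e0] at h2
    exact h2
  have hTnval : ∀ n, h n (T (p n).1 (p n).2)
      = ‖T + t n • S‖ - t n * h n (S (p n).1 (p n).2) := by
    intro n
    have e := hh2 n
    have happ : (T + t n • S) (p n).1 (p n).2
        = T (p n).1 (p n).2 + t n • S (p n).1 (p n).2 := by
      simp [ContinuousLinearMap.add_apply, ContinuousLinearMap.smul_apply]
    rw [hp2 n, happ, map_add, map_smul, smul_eq_mul] at e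
    linarith
  have htS0 : Tendsto (fun n => t (φ n) * h (φ n) (S (p (φ n)).1 (p (φ n)).2)) atTop (𝓝 0) := by
    have hSb : ∀ n, |h n (S (p n).1 (p n).2)| ≤ ‖S‖ := by
      intro n
      calc |h n (S (p n).1 (p n).2)| = ‖h n (S (p n).1 (p n).2)‖ := (Real.norm_eq_abs _).symm
      _ ≤ ‖h n‖ * ‖S (p n).1 (p n).2‖ := (h n).le_opNorm _
      _ = ‖S (p n).1 (p n).2‖ := by rw [hh1 n, one_mul]
      _ ≤ ‖S‖ := apply_le_of_unit S (hp1 n)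
    have hb : Tendsto (fun n => t (φ n) * ‖S‖) atTop (𝓝 0) := by
      simpa using ht0.mul_const ‖S‖
    refine squeeze_zero_norm (fun n => ?_) hb
    rw [Real.norm_eq_abs, abs_mul, abs_of_pos (htpos (φ n))]
    exact mul_le_mul_of_nonneg_left (hSb (φ n)) (htpos (φ n)).le
  have h2lim : Tendsto (fun n => h (φ n) (T (p (φ n)).1 (p (φ n)).2)) atTop (𝓝 ‖T‖) := by
    have e : (fun n => h (φ n) (T (p (φ n)).1 (p (φ n)).2))
        = fun n => ‖T + t (φ n) • S‖ - t (φ n) * h (φ n) (S (p (φ n)).1 (p (φ n)).2) :=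
      funext fun n => hTnval (φ n)
    rw [e]
    simpa using hnormlim.sub htS0
  have hkT : k (T q.1 q.2) = ‖T‖ := tendsto_nhds_unique hTq h2lim
  have hqT : ‖T q.1 q.2‖ = ‖T‖ := by
    refine le_antisymm (apply_le_of_unit T hq1) ?_
    calc ‖T‖ = k (T q.1 q.2) := hkT.symm
    _ ≤ |k (T q.1 q.2)| := le_abs_self _
    _ = ‖k (T q.1 q.2)‖ := (Real.norm_eq_abs _).symm
    _ ≤ ‖k‖ * ‖T q.1 q.2‖ := k.le_opNorm _
    _ ≤ 1 * ‖T q.1 q.2‖ := mul_le_mul_of_nonneg_right hk1 (norm_nonneg _)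
    _ = ‖T q.1 q.2‖ := one_mul _
  have hk1' : ‖k‖ = 1 := by
    refine le_antisymm hk1 ?_
    have h1 : ‖T‖ ≤ ‖k‖ * ‖T‖ := by
      calc ‖T‖ = k (T q.1 q.2) := hkT.symm
      _ ≤ ‖k (T q.1 q.2)‖ := le_abs_self _
      _ ≤ ‖k‖ * ‖T q.1 q.2‖ := k.le_opNorm _
      _ = ‖k‖ * ‖T‖ := by rw [hqT]
    by_contra hcon
    push_neg at hcon
    nlinarith
  have hΨle : ∀ n, Ψ S ≤ h n (S (p n).1 (p n).2) := by
    intro n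
    have e1 : Ψ (T + t n • S) = ‖T‖ + t n * Ψ S := by
      rw [map_add, map_smul, hΨT, smul_eq_mul]
    have e2 : Ψ (T + t n • S) ≤ ‖T + t n • S‖ := by
      have h1 : Ψ (T + t n • S) ≤ ‖Ψ‖ * ‖T + t n • S‖ := by
        exact fun_apply_le Ψ (T + t n • S)
      have h2 : (0:ℝ) ≤ ‖T + t n • S‖ := by exact norm_nonneg (T + t n • S)
      nlinarith
    have e3 := hTnval n
    have e4 : h n (T (p n).1 (p n).2) ≤ ‖T‖ := by
      calc h n (T (p n).1 (p n).2) ≤ ‖h n (T (p n).1 (p n).2)‖ := le_abs_self _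
      _ ≤ ‖h n‖ * ‖T (p n).1 (p n).2‖ := (h n).le_opNorm _
      _ = ‖T (p n).1 (p n).2‖ := by rw [hh1 n, one_mul]
      _ ≤ ‖T‖ := apply_le_of_unit T (hp1 n)
    have e5 : t n * Ψ S ≤ t n * h n (S (p n).1 (p n).2) := by linarith
    exact le_of_mul_le_mul_left e5 (htpos n)
  have hfin : Ψ S ≤ k (S q.1 q.2) := ge_of_tendsto' hSq fun n => hΨle (φ n)
  -- identify k (S q.1 q.2) with g (S x₀ y₀)
  have hgoal : k (S q.1 q.2) = g (S x₀ y₀) := by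
    rcases hsub q hq1 hqT with hc | hc | hc | hc
    · have hk : k = g := by
        refine hguniq k hk1' ?_
        rw [hz]
        have : T q.1 q.2 = T x₀ y₀ := by rw [hc]
        rw [← this, hkT]
      rw [hc, hk]
    · have hT' : T q.1 q.2 = -(T x₀ y₀) := by rw [hc]; simp
      have hk : -k = g := by
        refine hguniq (-k) (by rw [norm_neg, hk1']) ?_
        have : k (-(T x₀ y₀)) = ‖T‖ := by rw [← hT', hkT]
        rw [hz, ContinuousLinearMap.neg_apply]
        rw [map_neg] at this
        linarith
      have hS' : S q.1 q.2 = -(S x₀ y₀) := by rw [hc]; simp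
      rw [hS', map_neg, ← ContinuousLinearMap.neg_apply, hk]
    · have hT' : T q.1 q.2 = -(T x₀ y₀) := by rw [hc]; simp
      have hk : -k = g := by
        refine hguniq (-k) (by rw [norm_neg, hk1']) ?_
        have : k (-(T x₀ y₀)) = ‖T‖ := by rw [← hT', hkT]
        rw [hz, ContinuousLinearMap.neg_apply]
        rw [map_neg] at this
        linarith
      have hS' : S q.1 q.2 = -(S x₀ y₀) := by rw [hc]; simp
      rw [hS', map_neg, ← ContinuousLinearMap.neg_apply, hk]
    · have hT' : T q.1 q.2 = T x₀ y₀ := by rw [hc]; simp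
      have hk : k = g := by
        refine hguniq k hk1' ?_
        rw [hz, ← hT', hkT]
      have hS' : S q.1 q.2 = S x₀ y₀ := by rw [hc]; simp
      rw [hS', hk]
  rw [← hgoal]
  exact hfin

end Key

section Helpers

variable {X Y Z : Type*} [NormedAddCommGroup X] [NormedSpace ℝ X]
    [NormedAddCommGroup Y] [NormedSpace ℝ Y] [NormedAddCommGroup Z] [NormedSpace ℝ Z]

lemma rankOne_eval (g : Z →L[ℝ] ℝ) (f₁ : X →L[ℝ] ℝ) (f₂ : Y →L[ℝ] ℝ) (w : Z)
    (x : X) (y : Y) : g (rankOne f₁ f₂ w x y) = f₁ x * (f₂ y * g w) := by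
  rw [rankOne_apply, map_smul, map_smul, smul_eq_mul, smul_eq_mul]

lemma norming_eq (T : X →L[ℝ] Y →L[ℝ] Z)
    {x₁ : X} {y₁ : Y} {x₂ : X} {y₂ : Y}
    (hx₁ : ‖x₁‖ = 1) (hy₁ : ‖y₁‖ = 1) (hx₂ : ‖x₂‖ = 1) (hy₂ : ‖y₂‖ = 1)
    (g₁ g₂ : Z →L[ℝ] ℝ) (hg₁ : ‖g₁‖ = 1)
    (heq : ∀ S : X →L[ℝ] Y →L[ℝ] Z, g₂ (S x₂ y₂) = g₁ (S x₁ y₁)) :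
    (x₂ = x₁ ∨ x₂ = -x₁) ∧ (y₂ = y₁ ∨ y₂ = -y₁) := by
  have hx₁0 : x₁ ≠ 0 := by intro h; rw [h, norm_zero] at hx₁; norm_num at hx₁
  have hy₁0 : y₁ ≠ 0 := by intro h; rw [h, norm_zero] at hy₁; norm_num at hy₁
  have hg₁0 : ∃ w, g₁ w ≠ 0 := by
    by_contra hcon
    push_neg at hcon
    have : g₁ = 0 := ContinuousLinearMap.ext fun w => by simp [hcon w]
    rw [this, norm_zero] at hg₁; norm_num at hg₁
  obtain ⟨w₀, hw₀⟩ := hg₁0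
  obtain ⟨f₁₀, _, hf₁₀⟩ := exists_dual_vector ℝ x₁ (norm_ne_zero_iff.2 hx₁0)
  obtain ⟨f₂₀, _, hf₂₀⟩ := exists_dual_vector ℝ y₁ (norm_ne_zero_iff.2 hy₁0)
  have hf₁₀1 : f₁₀ x₁ = 1 := by rw [← hx₁]; exact_mod_cast hf₁₀
  have hf₂₀1 : f₂₀ y₁ = 1 := by rw [← hy₁]; exact_mod_cast hf₂₀
  have hr : ∀ (f₁ : X →L[ℝ] ℝ) (f₂ : Y →L[ℝ] ℝ) (w : Z),
      f₁ x₂ * (f₂ y₂ * g₂ w) = f₁ x₁ * (f₂ y₁ * g₁ w) := by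
    intro f₁ f₂ w
    have h1 := heq (rankOne f₁ f₂ w)
    rwa [rankOne_eval, rankOne_eval] at h1
  constructor
  · set c : ℝ := f₂₀ y₂ * g₂ w₀ with hc
    set d : ℝ := f₂₀ y₁ * g₁ w₀ with hd
    have hd0 : d ≠ 0 := by rw [hd, hf₂₀1, one_mul]; exact hw₀
    have hsep : c • x₂ = d • x₁ := by
      refine dual_sep fun f₁ => ?_
      rw [map_smul, map_smul, smul_eq_mul, smul_eq_mul, mul_comm c, mul_comm d]
      exact hr f₁ f₂₀ w₀
    have hc0 : c ≠ 0 := by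
      intro h0
      rw [h0, zero_smul] at hsep
      exact hx₁0 ((smul_eq_zero.1 hsep.symm).resolve_left hd0)
    have hx2 : x₂ = (c⁻¹ * d) • x₁ := by
      have h1 := congrArg (fun v => c⁻¹ • v) hsep
      simpa [smul_smul, inv_mul_cancel₀ hc0] using h1
    have hnorm : |c⁻¹ * d| = 1 := by
      have h1 := congrArg norm hx2
      rw [norm_smul, Real.norm_eq_abs, hx₂, hx₁, mul_one] at h1
      exact h1.symm
    rcases (abs_eq zero_le_one).1 hnorm with h | h
    · left; rw [hx2, h, one_smul]
    · right; rw [hx2, h]; exact neg_one_smul ℝ x₁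
  · set c : ℝ := f₁₀ x₂ * g₂ w₀ with hc
    set d : ℝ := f₁₀ x₁ * g₁ w₀ with hd
    have hd0 : d ≠ 0 := by rw [hd, hf₁₀1, one_mul]; exact hw₀
    have hsep : c • y₂ = d • y₁ := by
      refine dual_sep fun f₂ => ?_
      rw [map_smul, map_smul, smul_eq_mul, smul_eq_mul]
      have h1 := hr f₁₀ f₂ w₀
      rw [hc, hd]; ring_nf
      ring_nf at h1
      linarith
    have hc0 : c ≠ 0 := by
      intro h0
      rw [h0, zero_smul] at hsep
      exact hy₁0 ((smul_eq_zero.1 hsep.symm).resolve_left hd0)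
    have hy2 : y₂ = (c⁻¹ * d) • y₁ := by
      have h1 := congrArg (fun v => c⁻¹ • v) hsep
      simpa [smul_smul, inv_mul_cancel₀ hc0] using h1
    have hnorm : |c⁻¹ * d| = 1 := by
      have h1 := congrArg norm hy2
      rw [norm_smul, Real.norm_eq_abs, hy₂, hy₁, mul_one] at h1
      exact h1.symm
    rcases (abs_eq zero_le_one).1 hnorm with h | h
    · left; rw [hy2, h, one_smul]
    · right; rw [hy2, h]; exact neg_one_smul ℝ y₁

lemma g_eq {x₁ : X} {y₁ : Y} (hx₁ : ‖x₁‖ = 1) (hy₁ : ‖y₁‖ = 1)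
    (g g₁ : Z →L[ℝ] ℝ)
    (heq : ∀ S : X →L[ℝ] Y →L[ℝ] Z, g (S x₁ y₁) = g₁ (S x₁ y₁)) : g = g₁ := by
  have hx₁0 : x₁ ≠ 0 := by intro h; rw [h, norm_zero] at hx₁; norm_num at hx₁
  have hy₁0 : y₁ ≠ 0 := by intro h; rw [h, norm_zero] at hy₁; norm_num at hy₁
  obtain ⟨f₁₀, _, hf₁₀⟩ := exists_dual_vector ℝ x₁ (norm_ne_zero_iff.2 hx₁0)
  obtain ⟨f₂₀, _, hf₂₀⟩ := exists_dual_vector ℝ y₁ (norm_ne_zero_iff.2 hy₁0)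
  have hf₁₀1 : f₁₀ x₁ = 1 := by rw [← hx₁]; exact_mod_cast hf₁₀
  have hf₂₀1 : f₂₀ y₁ = 1 := by rw [← hy₁]; exact_mod_cast hf₂₀
  ext w
  have h1 := heq (rankOne f₁₀ f₂₀ w)
  rwa [rankOne_eval, rankOne_eval, hf₁₀1, hf₂₀1, one_mul, one_mul, one_mul, one_mul] at h1

/-- evalFun is a supporting functional when the data supports. -/
lemma evalFun_support (T : X →L[ℝ] Y →L[ℝ] Z) (hTpos : 0 < ‖T‖)
    (x : X) (y : Y) (g : Z →L[ℝ] ℝ) (hx : ‖x‖ = 1) (hy : ‖y‖ = 1) (hg : ‖g‖ = 1)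
    (hval : g (T x y) = ‖T‖) :
    ‖evalFun g x y‖ = 1 ∧ evalFun g x y T = ‖T‖ := by
  have hT : evalFun g x y T = ‖T‖ := by rw [evalFun_apply, hval]
  refine ⟨le_antisymm (evalFun_norm_le g x y hg hx hy) ?_, hT⟩
  have h1 : ‖T‖ ≤ ‖evalFun g x y‖ * ‖T‖ := by
    calc ‖T‖ = evalFun g x y T := hT.symm
    _ ≤ ‖evalFun g x y‖ * ‖T‖ := fun_apply_le _ T
  by_contra hcon
  push_neg at hcon
  nlinarith

end Helpers

/-- Smoothness at a (possibly non-unit) nonzero point: there is a unique norm-one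
supporting functional. -/
def SmoothPoint {X : Type*} [NormedAddCommGroup X] [NormedSpace ℝ X] (x : X) : Prop :=
  ∃! f : X →L[ℝ] ℝ, ‖f‖ = 1 ∧ f x = ‖x‖

/-- A nonzero bilinear operator between finite-dimensional spaces is smooth iff it
attains its norm exactly at `{(±x₀, ±y₀)}` with `T(x₀,y₀)` a smooth point of `Z`. -/
theorem statement12 {X Y Z : Type*} [NormedAddCommGroup X] [NormedSpace ℝ X]
    [NormedAddCommGroup Y] [NormedSpace ℝ Y] [NormedAddCommGroup Z] [NormedSpace ℝ Z]
    [FiniteDimensional ℝ X] [FiniteDimensional ℝ Y] [FiniteDimensional ℝ Z]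
    (T : X →L[ℝ] Y →L[ℝ] Z) (hT : T ≠ 0) :
    SmoothPoint T ↔
      ∃ (x₀ : X) (y₀ : Y), ‖x₀‖ = 1 ∧ ‖y₀‖ = 1 ∧
        ({p : X × Y | ‖p‖ = 1 ∧ ‖T p.1 p.2‖ = ‖T‖} =
          {(x₀, y₀), (-x₀, y₀), (x₀, -y₀), (-x₀, -y₀)}) ∧
        SmoothPoint (T x₀ y₀) := by
  -- nontriviality
  have hxy : ∃ x y, T x y ≠ 0 := by
    by_contra hcon
    push_neg at hcon
    exact hT (ContinuousLinearMap.ext fun x => ContinuousLinearMap.ext fun y => by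
      simpa using hcon x y)
  obtain ⟨xa, ya, hne⟩ := hxy
  haveI : Nontrivial X := nontrivial_of_ne xa 0 (by
    intro h0; apply hne; rw [h0]; simp)
  haveI : Nontrivial Y := nontrivial_of_ne ya 0 (by
    intro h0; apply hne; rw [h0]; simp)
  haveI : Nontrivial Z := nontrivial_of_ne (T xa ya) 0 hne
  have hTpos : 0 < ‖T‖ := by
    rcases (norm_nonneg T).lt_or_eq with h | h
    · exact h
    · exact absurd (by exact (ContinuousLinearMap.opNorm_zero_iff T).1 h.symm) hT
  constructor
  · -- forward direction
    rintro ⟨f, ⟨hf1, hfT⟩, huniq⟩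
    obtain ⟨⟨x₁, y₁⟩, hp₁n, hp₁T⟩ := exists_max T
    obtain ⟨hx₁, hy₁⟩ := mem_unit T hTpos hp₁n hp₁T
    simp only at hp₁T hx₁ hy₁
    have hz0 : T x₁ y₁ ≠ 0 := by
      rw [← norm_ne_zero_iff, hp₁T]; exact hTpos.ne'
    obtain ⟨g₁, hg₁1, hg₁z⟩ := exists_dual_vector ℝ (T x₁ y₁) (norm_ne_zero_iff.2 hz0)
    have hg₁z' : g₁ (T x₁ y₁) = ‖T x₁ y₁‖ := by exact_mod_cast hg₁z
    have hg₁T : g₁ (T x₁ y₁) = ‖T‖ := by rw [hg₁z', hp₁T]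
    have hsup₁ := evalFun_support T hTpos x₁ y₁ g₁ hx₁ hy₁ hg₁1 hg₁T
    have hf₁ : evalFun g₁ x₁ y₁ = f := huniq _ hsup₁
    refine ⟨x₁, y₁, hx₁, hy₁, ?_, ?_⟩
    · -- set equality
      apply Set.Subset.antisymm
      · rintro ⟨u, v⟩ ⟨hn, hv⟩
        simp only [Set.mem_setOf_eq] at hn hv
        obtain ⟨hu1, hv1⟩ := mem_unit T hTpos hn hv
        simp only at hu1 hv1 hv
        have hz₂0 : T u v ≠ 0 := by
          rw [← norm_ne_zero_iff, hv]; exact hTpos.ne'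
        obtain ⟨g₂, hg₂1, hg₂z⟩ := exists_dual_vector ℝ (T u v) (norm_ne_zero_iff.2 hz₂0)
        have hg₂T : g₂ (T u v) = ‖T‖ := by
          rw [← hv]; exact_mod_cast hg₂z
        have hsup₂ := evalFun_support T hTpos u v g₂ hu1 hv1 hg₂1 hg₂T
        have hf₂ : evalFun g₂ u v = f := huniq _ hsup₂
        have heq : ∀ S : X →L[ℝ] Y →L[ℝ] Z, g₂ (S u v) = g₁ (S x₁ y₁) := by
          intro S
          have h1 := congrArg (fun F : (X →L[ℝ] Y →L[ℝ] Z) →L[ℝ] ℝ => F S)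
            (hf₂.trans hf₁.symm)
          simpa using h1
        obtain ⟨hux, hvy⟩ := norming_eq T hx₁ hy₁ hu1 hv1 g₁ g₂ hg₁1 heq
        simp only [Set.mem_insert_iff, Set.mem_singleton_iff, Prod.mk.injEq]
        rcases hux with h | h <;> rcases hvy with h' | h' <;> tauto
      · rintro p hp
        simp only [Set.mem_insert_iff, Set.mem_singleton_iff] at hp
        have hTneg1 : ∀ (y : Y), T (-x₁) y = -(T x₁ y) := by
          intro y; rw [map_neg]; rfl
        rcases hp with rfl | rfl | rfl | rfl <;>
          refine ⟨by simp [Prod.norm_def, hx₁, hy₁], ?_⟩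
        · exact hp₁T
        · show ‖T (-x₁) y₁‖ = ‖T‖
          rw [hTneg1, norm_neg, hp₁T]
        · show ‖T x₁ (-y₁)‖ = ‖T‖
          rw [map_neg, norm_neg, hp₁T]
        · show ‖T (-x₁) (-y₁)‖ = ‖T‖
          rw [hTneg1, norm_neg, map_neg, norm_neg, hp₁T]
      -- end set equality
    · -- smoothness of T x₁ y₁
      refine ⟨g₁, ⟨hg₁1, hg₁z'⟩, ?_⟩
      rintro g ⟨hg1, hgz⟩
      have hgT : g (T x₁ y₁) = ‖T‖ := by rw [hgz, hp₁T]
      have hsup := evalFun_support T hTpos x₁ y₁ g hx₁ hy₁ hg1 hgT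
      have hfg : evalFun g x₁ y₁ = f := huniq _ hsup
      refine g_eq hx₁ hy₁ g g₁ ?_
      intro S
      have h1 := congrArg (fun F : (X →L[ℝ] Y →L[ℝ] Z) →L[ℝ] ℝ => F S)
        (hfg.trans hf₁.symm)
      simpa using h1
  · -- backward direction
    rintro ⟨x₀, y₀, hx₀, hy₀, hset, hsm⟩
    obtain ⟨g, ⟨hg1, hgz⟩, hgu⟩ := hsm
    have hmem₀ : ((x₀, y₀) : X × Y) ∈ {p : X × Y | ‖p‖ = 1 ∧ ‖T p.1 p.2‖ = ‖T‖} := by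
      rw [hset]; exact Set.mem_insert _ _
    have hz : ‖T x₀ y₀‖ = ‖T‖ := hmem₀.2
    have hsub : ∀ p : X × Y, ‖p‖ = 1 → ‖T p.1 p.2‖ = ‖T‖ →
        p = (x₀, y₀) ∨ p = (-x₀, y₀) ∨ p = (x₀, -y₀) ∨ p = (-x₀, -y₀) := by
      intro p h1 h2
      have : p ∈ ({(x₀, y₀), (-x₀, y₀), (x₀, -y₀), (-x₀, -y₀)} : Set (X × Y)) := by
        rw [← hset]; exact ⟨h1, h2⟩
      simpa [Set.mem_insert_iff, Set.mem_singleton_iff] using this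
    have hgT : g (T x₀ y₀) = ‖T‖ := by rw [hgz, hz]
    have hsup := evalFun_support T hTpos x₀ y₀ g hx₀ hy₀ hg1 hgT
    refine ⟨evalFun g x₀ y₀, hsup, ?_⟩
    rintro Ψ ⟨hΨ1, hΨT⟩
    have hguniq : ∀ g' : Z →L[ℝ] ℝ, ‖g'‖ = 1 → g' (T x₀ y₀) = ‖T x₀ y₀‖ → g' = g :=
      fun g' h1 h2 => hgu g' ⟨h1, h2⟩
    have hle : ∀ S : X →L[ℝ] Y →L[ℝ] Z, Ψ S ≤ g (S x₀ y₀) :=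
      fun S => key_le T hTpos x₀ y₀ hz hsub g hguniq Ψ hΨ1.le hΨT S
    refine ContinuousLinearMap.ext fun S => ?_
    have h1 := hle S
    have h2 := hle (-S)
    have h3 : (-S) x₀ y₀ = -(S x₀ y₀) := by
      rw [show (-S) x₀ = -(S x₀) from rfl]; rfl
    rw [h3, map_neg, map_neg] at h2
    have : Ψ S = g (S x₀ y₀) := le_antisymm h1 (by linarith)
    rw [evalFun_apply, this]
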